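/- Maximizing the Shannon entropy -Σ p_k ln p_k over probability distributions (p_{Φ+}, p_{Ψ-}, p_{Φ-}, p_{Ψ+}) subject to the constraint p_{Φ+} - p_{Ψ-} = b with |b| ≤ 1 yields the unique maximizer with p_{Φ-} = p_{Ψ+} = (1-b^2)/4, p_{Φ+} = (1+b)^2/4, p_{Ψ-} = (1-b)^2/4. -/

import Mathlib

set_option maxHeartbeats 1000000

/-- The Shannon-MaxEnt eigenvalues for the Bell-CHSH constraint:
(p_{Φ+}, p_{Ψ-}, p_{Φ-}, p_{Ψ+}) = ((1+b)²/4, (1-b)²/4, (1-b²)/4, (1-b²)/4). -/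
noncomputable def pstar (b : ℝ) : Fin 4 → ℝ :=
  ![(1 + b) ^ 2 / 4, (1 - b) ^ 2 / 4, (1 - b ^ 2) / 4, (1 - b ^ 2) / 4]

lemma gibbs_term {p q : ℝ} (hp : 0 ≤ p) (hq : 0 < q) :
    p * Real.log q - p * Real.log p ≤ q - p := by
  rcases eq_or_lt_of_le hp with h | h
  · simp [← h]; linarith
  · have h1 : Real.log (q / p) ≤ q / p - 1 := Real.log_le_sub_one_of_pos (by positivity)
    have h2 : Real.log (q / p) = Real.log q - Real.log p :=
      Real.log_div (ne_of_gt hq) (ne_of_gt h)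
    rw [h2] at h1
    have h3 : p * (Real.log q - Real.log p) ≤ p * (q / p - 1) :=
      mul_le_mul_of_nonneg_left h1 hp
    have h4 : p * (q / p - 1) = q - p := by field_simp
    nlinarith [h3, h4]

lemma gibbs_term_strict {p q : ℝ} (hp : 0 ≤ p) (hq : 0 < q) (hne : p ≠ q) :
    p * Real.log q - p * Real.log p < q - p := by
  rcases eq_or_lt_of_le hp with h | h
  · rw [← h]; simpa using hq
  · have hne' : q / p ≠ 1 := by
      intro h'
      apply hne
      field_simp at h'
      linarith
    have h1 : Real.log (q / p) < q / p - 1 :=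
      Real.log_lt_sub_one_of_pos (by positivity) hne'
    have h2 : Real.log (q / p) = Real.log q - Real.log p :=
      Real.log_div (ne_of_gt hq) (ne_of_gt h)
    rw [h2] at h1
    have h3 : p * (Real.log q - Real.log p) < p * (q / p - 1) :=
      (mul_lt_mul_iff_right₀ h).mpr h1
    have h4 : p * (q / p - 1) = q - p := by field_simp
    nlinarith [h3, h4]

/-- maximizing the Shannon entropy over probability 4-vectors subject to
p_{Φ+} - p_{Ψ-} = b (|b| ≤ 1) yields the unique maximizer `pstar b`. -/
theorem shannon_maxent_bell (b : ℝ) (hb : |b| ≤ 1) :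
    (∀ k, 0 ≤ pstar b k) ∧ (∑ k, pstar b k = 1) ∧ (pstar b 0 - pstar b 1 = b) ∧
    ∀ p : Fin 4 → ℝ, (∀ k, 0 ≤ p k) → ∑ k, p k = 1 → p 0 - p 1 = b →
      (-∑ k, p k * Real.log (p k)) ≤ (-∑ k, pstar b k * Real.log (pstar b k)) ∧
      ((-∑ k, p k * Real.log (p k)) = (-∑ k, pstar b k * Real.log (pstar b k))
        → p = pstar b) := by
  obtain ⟨hb1, hb2⟩ := abs_le.mp hb
  have hb2' : b ^ 2 ≤ 1 := by nlinarith
  have hq0 : pstar b 0 = (1 + b) ^ 2 / 4 := rfl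
  have hq1 : pstar b 1 = (1 - b) ^ 2 / 4 := rfl
  have hq2 : pstar b 2 = (1 - b ^ 2) / 4 := rfl
  have hq3 : pstar b 3 = (1 - b ^ 2) / 4 := rfl
  have hqnn : ∀ k, 0 ≤ pstar b k := by
    intro k
    fin_cases k <;> simp [pstar] <;> nlinarith
  have hqsum : ∑ k, pstar b k = 1 := by
    rw [Fin.sum_univ_four, hq0, hq1, hq2, hq3]; ring
  have hqcon : pstar b 0 - pstar b 1 = b := by
    rw [hq0, hq1]; ring
  refine ⟨hqnn, hqsum, hqcon, ?_⟩
  intro p hp hsum hcon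
  by_cases hbe : b = 1
  · -- boundary case b = 1 : p is forced to be (1,0,0,0) = pstar 1
    subst hbe
    have hs4 : p 0 + p 1 + p 2 + p 3 = 1 := by rw [← Fin.sum_univ_four]; exact hsum
    have h1 : p 1 = 0 := by nlinarith [hp 0, hp 1, hp 2, hp 3]
    have h2 : p 2 = 0 := by nlinarith [hp 0, hp 1, hp 2, hp 3]
    have h3 : p 3 = 0 := by nlinarith [hp 0, hp 1, hp 2, hp 3]
    have h0 : p 0 = 1 := by linarith
    have hpq : p = pstar 1 := by
      funext k
      fin_cases k <;> simp [pstar, h0, h1, h2, h3] <;> norm_num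
    exact ⟨by rw [hpq], fun _ => hpq⟩
  by_cases hbe' : b = -1
  · subst hbe'
    have hs4 : p 0 + p 1 + p 2 + p 3 = 1 := by rw [← Fin.sum_univ_four]; exact hsum
    have h0 : p 0 = 0 := by nlinarith [hp 0, hp 1, hp 2, hp 3]
    have h2 : p 2 = 0 := by nlinarith [hp 0, hp 1, hp 2, hp 3]
    have h3 : p 3 = 0 := by nlinarith [hp 0, hp 1, hp 2, hp 3]
    have h1 : p 1 = 1 := by linarith
    have hpq : p = pstar (-1) := by
      funext k
      fin_cases k <;> simp [pstar, h0, h1, h2, h3] <;> norm_num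
    exact ⟨by rw [hpq], fun _ => hpq⟩
  -- interior case
  have hA : (0:ℝ) < 1 + b := by
    rcases lt_or_eq_of_le hb1 with h | h
    · linarith
    · exact absurd h.symm hbe'
  have hB : (0:ℝ) < 1 - b := by
    rcases lt_or_eq_of_le hb2 with h | h
    · linarith
    · exact absurd h hbe
  set LA := Real.log ((1 + b) / 2) with hLA
  set LB := Real.log ((1 - b) / 2) with hLB
  have hqpos : ∀ k, 0 < pstar b k := by
    intro k
    fin_cases k <;> simp [pstar] <;>
      first
        | nlinarith
        | exact abs_lt.mpr ⟨by linarith, by linarith⟩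
  have hlog0 : Real.log (pstar b 0) = 2 * LA := by
    rw [hq0, show (1 + b) ^ 2 / 4 = ((1 + b) / 2) ^ 2 by ring, Real.log_pow]
    push_cast; ring
  have hlog1 : Real.log (pstar b 1) = 2 * LB := by
    rw [hq1, show (1 - b) ^ 2 / 4 = ((1 - b) / 2) ^ 2 by ring, Real.log_pow]
    push_cast; ring
  have hlog2 : Real.log (pstar b 2) = LA + LB := by
    rw [hq2, show (1 - b ^ 2) / 4 = ((1 + b) / 2) * ((1 - b) / 2) by ring,
      Real.log_mul (by positivity) (by positivity)]
  have hlog3 : Real.log (pstar b 3) = LA + LB := by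
    rw [hq3, show (1 - b ^ 2) / 4 = ((1 + b) / 2) * ((1 - b) / 2) by ring,
      Real.log_mul (by positivity) (by positivity)]
  have cross : ∀ r : Fin 4 → ℝ, (∑ k, r k = 1) → r 0 - r 1 = b →
      ∑ k, r k * Real.log (pstar b k) = (1 + b) * LA + (1 - b) * LB := by
    intro r hs hc
    rw [Fin.sum_univ_four, hlog0, hlog1, hlog2, hlog3]
    rw [Fin.sum_univ_four] at hs
    linear_combination (LA + LB) * hs + (LA - LB) * hc
  have hcrossp := cross p hsum hcon
  have hcrossq := cross (pstar b) hqsum hqcon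
  have hle : ∑ k, (p k * Real.log (pstar b k) - p k * Real.log (p k)) ≤
      ∑ k, (pstar b k - p k) :=
    Finset.sum_le_sum fun i _ => gibbs_term (hp i) (hqpos i)
  have hsub1 : ∑ k, (p k * Real.log (pstar b k) - p k * Real.log (p k)) =
      (∑ k, p k * Real.log (pstar b k)) - ∑ k, p k * Real.log (p k) :=
    Finset.sum_sub_distrib _ _
  have hsub2 : ∑ k, (pstar b k - p k) = (0:ℝ) := by
    rw [Finset.sum_sub_distrib, hqsum, hsum]; ring
  constructor
  · rw [hsub1, hsub2] at hle
    linarith [hcrossp, hcrossq, hle]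
  · intro heq
    by_contra hne
    obtain ⟨k, hk⟩ := Function.ne_iff.mp hne
    have hlt : ∑ k, (p k * Real.log (pstar b k) - p k * Real.log (p k)) <
        ∑ k, (pstar b k - p k) :=
      Finset.sum_lt_sum (fun i _ => gibbs_term (hp i) (hqpos i))
        ⟨k, Finset.mem_univ k, gibbs_term_strict (hp k) (hqpos k) hk⟩
    rw [hsub1, hsub2] at hlt
    have : (-∑ k, p k * Real.log (p k)) < (-∑ k, pstar b k * Real.log (pstar b k)) := by
      linarith [hcrossp, hcrossq, hlt]
    linarith [heq ▸ this]
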